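/- Let Q be a finite abelian group of m×m unitary complex matrices, let φ_1, …, φ_r ∈ ℂ^m, and suppose the compound geometrically uniform vectors {Uφ_k : U ∈ Q, 1 ≤ k ≤ r} span ℂ^m, so that the frame operator S = Σ_{U ∈ Q} Σ_{k=1}^r (Uφ_k)(Uφ_k)* is Hermitian positive definite. Let T be the unique Hermitian positive definite matrix with T² = S and set μ_k = T⁻¹φ_k. Then the canonical tight frame vectors satisfy T⁻¹(Uφ_k) = Uμ_k for all U ∈ Q and 1 ≤ k ≤ r, and Σ_{U ∈ Q} Σ_{k=1}^r (Uμ_k)(Uμ_k)* = I. That is, the canonical tight frame associated with a CGU frame is CGU with the same generating group Q and generating vectors μ_k = S^{-1/2}φ_k. -/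

import Mathlib

open Matrix
open scoped ComplexOrder

lemma aux_vmv {m : ℕ} (A : Matrix (Fin m) (Fin m) ℂ) (x : Fin m → ℂ) :
    vecMulVec (A *ᵥ x) (star (A *ᵥ x)) = A * vecMulVec x (star x) * Aᴴ := by
  have h1 : vecMulVec (A *ᵥ x) (star (A *ᵥ x)) = replicateCol (Fin 1) (A *ᵥ x) * (replicateCol (Fin 1) (A *ᵥ x))ᴴ := by
    rw [vecMulVec_eq (Fin 1), conjTranspose_replicateCol]
    rfl
  have h2 : vecMulVec x (star x) = replicateCol (Fin 1) x * (replicateCol (Fin 1) x)ᴴ := by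
    rw [vecMulVec_eq (Fin 1), conjTranspose_replicateCol]
    rfl
  rw [h1, h2, replicateCol_mulVec, conjTranspose_mul]
  simp [Matrix.mul_assoc]

theorem stmt_11 {m r : ℕ} (hm : 0 < m)
    (Q : Subgroup (Matrix.unitaryGroup (Fin m) ℂ)) [Fintype Q]
    (habelian : ∀ U V : Q, U * V = V * U)
    (φ : Fin r → Fin m → ℂ)
    (hspan : Submodule.span ℂ
      {x : Fin m → ℂ | ∃ (U : Q) (k : Fin r), x = (U : Matrix (Fin m) (Fin m) ℂ) *ᵥ φ k} = ⊤)
    (S : Matrix (Fin m) (Fin m) ℂ)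
    (hS : S = ∑ U : Q, ∑ k : Fin r,
      vecMulVec ((U : Matrix (Fin m) (Fin m) ℂ) *ᵥ φ k)
        (star ((U : Matrix (Fin m) (Fin m) ℂ) *ᵥ φ k)))
    (T : Matrix (Fin m) (Fin m) ℂ)
    (hT : T.PosDef)
    (hTsq : T * T = S)
    (μ : Fin r → Fin m → ℂ)
    (hμ : ∀ k : Fin r, μ k = T⁻¹ *ᵥ φ k) :
    (∀ (U : Q) (k : Fin r),
      T⁻¹ *ᵥ ((U : Matrix (Fin m) (Fin m) ℂ) *ᵥ φ k)
        = (U : Matrix (Fin m) (Fin m) ℂ) *ᵥ μ k) ∧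
    ∑ U : Q, ∑ k : Fin r,
      vecMulVec ((U : Matrix (Fin m) (Fin m) ℂ) *ᵥ μ k)
        (star ((U : Matrix (Fin m) (Fin m) ℂ) *ᵥ μ k)) = (1 : Matrix (Fin m) (Fin m) ℂ) := by
  have hTps : T.PosSemidef := hT.posSemidef
  have hTunit : IsUnit T := hT.isUnit
  have hTinv : T⁻¹ * T = 1 := nonsing_inv_mul T (isUnit_iff_isUnit_det T |>.1 hTunit)
  have hTinv' : T * T⁻¹ = 1 := mul_nonsing_inv T (isUnit_iff_isUnit_det T |>.1 hTunit)
  -- S commutes with each U, hence so does T, hence so does T⁻¹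
  have hUS : ∀ U : Q, (U : Matrix (Fin m) (Fin m) ℂ) * S * (U : Matrix (Fin m) (Fin m) ℂ)ᴴ = S := by
    intro U
    set Um := (U : Matrix (Fin m) (Fin m) ℂ)
    rw [hS]
    rw [Finset.mul_sum, Finset.sum_mul]
    refine Fintype.sum_equiv (Equiv.mulLeft U) _ _ fun V => ?_
    rw [Finset.mul_sum, Finset.sum_mul]
    refine Finset.sum_congr rfl fun k _ => ?_
    have hcoe : ((↑(U * V) : Matrix.unitaryGroup (Fin m) ℂ) : Matrix (Fin m) (Fin m) ℂ)
        = Um * (V : Matrix (Fin m) (Fin m) ℂ) := rfl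
    rw [Equiv.coe_mulLeft, hcoe, ← mulVec_mulVec, aux_vmv Um, Matrix.mul_assoc]
  have hUT : ∀ U : Q, (U : Matrix (Fin m) (Fin m) ℂ) * T = T * (U : Matrix (Fin m) (Fin m) ℂ) := by
    intro U
    set Um := (U : Matrix (Fin m) (Fin m) ℂ) with hUm
    have hstar : Umᴴ * Um = 1 := UnitaryGroup.star_mul_self (U : Matrix.unitaryGroup (Fin m) ℂ)
    have hW : (Um * T * Umᴴ).PosSemidef := hTps.mul_mul_conjTranspose_same Um
    have hWsq : (Um * T * Umᴴ) ^ 2 = T ^ 2 := by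
      rw [pow_two, pow_two, hTsq, ← hUS U]
      calc Um * T * Umᴴ * (Um * T * Umᴴ)
          = Um * T * (Umᴴ * Um) * T * Umᴴ := by noncomm_ring
        _ = Um * (T * T) * Umᴴ := by rw [hstar]; noncomm_ring
        _ = Um * S * Umᴴ := by rw [hTsq]
    have heq : Um * T * Umᴴ = T := by
      open scoped MatrixOrder in
      exact (CFC.sq_eq_sq_iff _ _ hW.nonneg hTps.nonneg).1 hWsq
    calc Um * T = Um * T * (Umᴴ * Um) := by rw [hstar, Matrix.mul_one]
      _ = (Um * T * Umᴴ) * Um := by noncomm_ring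
      _ = T * Um := by rw [heq]
  have hUTi : ∀ U : Q, (U : Matrix (Fin m) (Fin m) ℂ) * T⁻¹
      = T⁻¹ * (U : Matrix (Fin m) (Fin m) ℂ) := by
    intro U
    set Um := (U : Matrix (Fin m) (Fin m) ℂ)
    have h : Um * T = T * Um := hUT U
    calc Um * T⁻¹ = T⁻¹ * T * Um * T⁻¹ := by rw [hTinv, Matrix.one_mul]
      _ = T⁻¹ * (Um * T) * T⁻¹ := by rw [h]; noncomm_ring
      _ = T⁻¹ * Um * (T * T⁻¹) := by noncomm_ring
      _ = T⁻¹ * Um := by rw [hTinv', Matrix.mul_one]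
  have part1 : ∀ (U : Q) (k : Fin r),
      T⁻¹ *ᵥ ((U : Matrix (Fin m) (Fin m) ℂ) *ᵥ φ k)
        = (U : Matrix (Fin m) (Fin m) ℂ) *ᵥ μ k := by
    intro U k
    rw [hμ k, mulVec_mulVec, mulVec_mulVec, ← hUTi U]
  refine ⟨part1, ?_⟩
  have hTiH : T⁻¹ᴴ = T⁻¹ := by
    rw [conjTranspose_nonsing_inv, hT.isHermitian.eq]
  calc ∑ U : Q, ∑ k : Fin r,
        vecMulVec ((U : Matrix (Fin m) (Fin m) ℂ) *ᵥ μ k)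
          (star ((U : Matrix (Fin m) (Fin m) ℂ) *ᵥ μ k))
      = ∑ U : Q, ∑ k : Fin r, T⁻¹ *
          vecMulVec ((U : Matrix (Fin m) (Fin m) ℂ) *ᵥ φ k)
            (star ((U : Matrix (Fin m) (Fin m) ℂ) *ᵥ φ k)) * T⁻¹ᴴ := by
        refine Finset.sum_congr rfl fun U _ => Finset.sum_congr rfl fun k _ => ?_
        rw [← part1 U k, aux_vmv]
    _ = T⁻¹ * S * T⁻¹ := by
        rw [hTiH, hS, Finset.mul_sum, Finset.sum_mul]
        refine Finset.sum_congr rfl fun U _ => ?_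
        rw [Finset.mul_sum, Finset.sum_mul]
    _ = 1 := by
        rw [← hTsq, ← Matrix.mul_assoc, Matrix.mul_assoc (T⁻¹ * T), hTinv, hTinv',
          Matrix.mul_one]
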